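/- Boundary behavior of classical solutions: let u ∈ C_2^{1,2}([0,T]×P_2(S)) be a classical solution of the obstacle problem on the Wasserstein space (min_{m' ∈ C_u(t,m)} [ −(𝕃u + F)(t,m') ] = 0, D_I u(t,m,·) ≥ 0, u(T,·) = g, with C_u(t,m) := { m' ⪯ m : u(t,m') = u(t,m) }). Then for every m ∈ ∂P_2(S) := { m ∈ P_2(S) : m(ℝ^d×{1}) = 0 } (i.e. all particles are stopped) and every t ∈ [0,T], u(t,m) = g(m). -/
import Mathlib


open MeasureTheory Filter Set
open scoped ENNReal NNReal

noncomputable section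

namespace MFOS

/-- Euclidean state space `ℝ^d`. -/
abbrev Rd (d : ℕ) := Fin d → ℝ

/-- The extended state space `S = ℝ^d × {0,1}`, where `{0,1}` is encoded by `Bool`. -/
abbrev Sd (d : ℕ) := Rd d × Bool

/-- real value of the survival indicator -/
def bToR (i : Bool) : ℝ := if i then 1 else 0

/-- a distance on `S` -/
def dS {d : ℕ} (p q : Sd d) : ℝ := ‖p.1 - q.1‖ + |bToR p.2 - bToR q.2|

/-- The 2-Wasserstein distance between two measures, associated with a cost
function `dE` on the underlying space. -/
def W2 {E : Type*} [MeasurableSpace E] (dE : E → E → ℝ) (μ ν : Measure E) : ℝ :=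
  sInf { r : ℝ | ∃ π : Measure (E × E), IsProbabilityMeasure π ∧
    π.map Prod.fst = μ ∧ π.map Prod.snd = ν ∧
    r = Real.sqrt (∫ p, dE p.1 p.2 ^ 2 ∂π) }

/-- `P₂(S)` : square integrable probability measures on `S` -/
def MemP2S {d : ℕ} (m : Measure (Sd d)) : Prop :=
  IsProbabilityMeasure m ∧ Integrable (fun p : Sd d => ‖p.1‖ ^ 2) m

/-- the 2-Wasserstein distance on `P₂(S)` -/
def W2S {d : ℕ} (m m' : Measure (Sd d)) : ℝ := W2 dS m m'

/-- `P₂(ℝ^d)` : square integrable probability measures on `ℝ^d` -/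
def MemP2R {d : ℕ} (μ : Measure (Rd d)) : Prop :=
  IsProbabilityMeasure μ ∧ Integrable (fun x : Rd d => ‖x‖ ^ 2) μ

/-- the 2-Wasserstein distance on `P₂(ℝ^d)` -/
def W2R {d : ℕ} (μ ν : Measure (Rd d)) : ℝ := W2 (fun x y : Rd d => ‖x - y‖) μ ν

/-- the sub-probability marginal `A ↦ m(A × {i})` on `ℝ^d` -/
def slice {d : ℕ} (m : Measure (Sd d)) (i : Bool) : Measure (Rd d) :=
  (m.restrict (Prod.snd ⁻¹' {i})).map Prod.fst

/-- the convex combination `l•m' + (1-l)•m` -/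
def mix {E : Type*} [MeasurableSpace E] (l : ℝ) (m' m : Measure E) : Measure E :=
  ENNReal.ofReal l • m' + ENNReal.ofReal (1 - l) • m

/-- the partial (stopping) order `m' ⪯ m` on `P₂(S)`: `m'` is obtained from `m` by
randomly stopping a proportion `1 - p(x)` of the surviving particles. -/
def StopOrder {d : ℕ} (m' m : Measure (Sd d)) : Prop :=
  ∃ p : Rd d → ℝ, Measurable p ∧ (∀ x, p x ∈ Icc (0:ℝ) 1) ∧
    slice m' true = (slice m true).withDensity (fun x => ENNReal.ofReal (p x)) ∧
    slice m' false =
      (slice m true).withDensity (fun x => ENNReal.ofReal (1 - p x)) + slice m false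

section Canonical

variable (d : ℕ) (T : ℝ)

/-- The canonical path space `Ω = C⁰([-1,T],ℝ^d) × 𝕀⁰([-1,T])`:
`X` is continuous on `[-1,T]` and constant on `[-1,0)`; `I` is nonincreasing,
càdlàg, `{0,1}`-valued, constant on `[-1,0)` and equal to `0` at `T`. -/
structure CanonPath where
  X : ℝ → Rd d
  I : ℝ → Bool
  contX : ContinuousOn X (Icc (-1) T)
  constX : ∀ s ∈ Ico (-1:ℝ) 0, X s = X (-1)
  constI : ∀ s ∈ Ico (-1:ℝ) 0, I s = I (-1)
  antitoneI : ∀ s ∈ Icc (-1:ℝ) T, ∀ t ∈ Icc (-1:ℝ) T, s ≤ t → I t ≤ I s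
  rightContI : ∀ t ∈ Ico (-1:ℝ) T, ∃ ε > 0, ∀ s ∈ Ico t (t + ε), I s = I t
  endI : I T = false

variable {d T}

/-- the canonical process `Y = (X, I)` -/
def YS (ω : CanonPath d T) (s : ℝ) : Sd d := (ω.X s, ω.I s)

/-- the canonical σ-algebra, generated by the evaluation maps -/
instance : MeasurableSpace (CanonPath d T) :=
  ⨆ s ∈ Icc (-1:ℝ) T, MeasurableSpace.comap (fun ω : CanonPath d T => YS ω s) inferInstance

open Classical in
/-- the left limit `I_{t-}` (`I` being nonincreasing, it equals the infimum of `I` before `t`) -/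
def Ileft (ω : CanonPath d T) (t : ℝ) : Bool :=
  if ∀ s ∈ Ico (-1:ℝ) t, ω.I s = true then true else false

/-- the left limit `Y_{t-}` (`X` being continuous) -/
def Yleft (ω : CanonPath d T) (t : ℝ) : Sd d := (ω.X t, Ileft ω t)

/-- the stopping time `τ = inf{t ≥ 0 : I_t = 0}` -/
def tauCP (ω : CanonPath d T) : ℝ := sInf {t : ℝ | 0 ≤ t ∧ ω.I t = false}

/-- the flow of marginal laws `s ↦ P_{Y_s}` -/
def lawY (P : Measure (CanonPath d T)) (s : ℝ) : Measure (Sd d) :=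
  P.map (fun ω => YS ω s)

/-- the flow of left-limit marginal laws `s ↦ P_{Y_{s-}}` -/
def lawYleft (P : Measure (CanonPath d T)) (s : ℝ) : Measure (Sd d) :=
  P.map (fun ω => Yleft ω s)

/-- `Z` is a `P`-martingale on `[t,T]` w.r.t. the canonical filtration, in the
(equivalent) test-function formulation: increments of `Z` are orthogonal to every
bounded measurable functional of the path stopped at the earlier time. -/
def IsMartOnCP (Z : ℝ → CanonPath d T → ℝ) (P : Measure (CanonPath d T)) (t : ℝ) : Prop :=
  ∀ s₁ s₂ : ℝ, t ≤ s₁ → s₁ ≤ s₂ → s₂ ≤ T →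
    ∀ φ : (ℝ → Sd d) → ℝ, Measurable φ → (∃ C, ∀ y, |φ y| ≤ C) →
      ∫ ω, (Z s₂ ω - Z s₁ ω) * φ (fun r => YS ω (min (max r (-1)) s₁)) ∂P = 0

/-- the process `M = X - ∫_0^· b(r, X_r, P_{Y_r}) I_r dr` -/
def Mproc (b : ℝ → Rd d → Measure (Sd d) → Rd d)
    (P : Measure (CanonPath d T)) (s : ℝ) (ω : CanonPath d T) : Rd d :=
  ω.X s - ∫ r in Ioc (0:ℝ) s, bToR (ω.I r) • b r (ω.X r) (lawY P r)

/-- the process `N = M M^⊤ - ∫_0^· σ²(r, X_r, P_{Y_r}) I_r dr` (entry `(j,k)`) -/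
def Nproc (b : ℝ → Rd d → Measure (Sd d) → Rd d)
    (σm : ℝ → Rd d → Measure (Sd d) → Matrix (Fin d) (Fin d) ℝ)
    (P : Measure (CanonPath d T)) (j k : Fin d) (s : ℝ) (ω : CanonPath d T) : ℝ :=
  Mproc b P s ω j * Mproc b P s ω k -
    ∫ r in Ioc (0:ℝ) s,
      bToR (ω.I r) * ((σm r (ω.X r) (lawY P r) * σm r (ω.X r) (lawY P r)) j k)

/-- The set `𝒫(t,m)` of weak solutions of the stopped McKean-Vlasov SDE started
at time `t` from the distribution `m`. -/
def Adm (b : ℝ → Rd d → Measure (Sd d) → Rd d)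
    (σm : ℝ → Rd d → Measure (Sd d) → Matrix (Fin d) (Fin d) ℝ)
    (t : ℝ) (m : Measure (Sd d)) : Set (Measure (CanonPath d T)) :=
  {P | IsProbabilityMeasure P ∧ lawYleft P t = m ∧
    (∀ᵐ ω ∂P, ∀ s ∈ Ico (-1:ℝ) t, YS ω s = YS ω (-1)) ∧
    (∀ j : Fin d, IsMartOnCP (fun s ω => Mproc b P s ω j) P t) ∧
    (∀ j k : Fin d, IsMartOnCP (Nproc b σm P j k) P t)}

/-- the reward functional `J(t,P) = ∫_t^T F(r, P_{Y_r}) dr + g(P_{Y_T})` -/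
def Jfun (F : ℝ → Measure (Sd d) → ℝ) (g : Measure (Sd d) → ℝ)
    (t : ℝ) (P : Measure (CanonPath d T)) : ℝ :=
  (∫ r in Ioc t T, F r (lawY P r)) + g (lawY P T)

variable (d T) in
/-- the value function `V(t,m) = sup_{P ∈ 𝒫(t,m)} J(t,P)` -/
def Vfun (b : ℝ → Rd d → Measure (Sd d) → Rd d)
    (σm : ℝ → Rd d → Measure (Sd d) → Matrix (Fin d) (Fin d) ℝ)
    (F : ℝ → Measure (Sd d) → ℝ) (g : Measure (Sd d) → ℝ)
    (t : ℝ) (m : Measure (Sd d)) : ℝ :=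
  sSup (Jfun (d := d) (T := T) F g t '' Adm (d := d) (T := T) b σm t m)

end Canonical

/-- the aggregated running reward `F(t,m) = ∫ f(t,x,m) m(dx,1)` -/
def Fint {d : ℕ} (f : ℝ → Rd d → Measure (Sd d) → ℝ) (t : ℝ) (m : Measure (Sd d)) : ℝ :=
  ∫ x, f t x m ∂(slice m true)

/-- the extension of `g` to `P₂(S)` by `g(m) := g(m(·,{0,1}))` -/
def gext {d : ℕ} (g : Measure (Rd d) → ℝ) (m : Measure (Sd d)) : ℝ :=
  g (m.map Prod.fst)

/-- (entrywise) Frobenius norm of a matrix -/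
def matNorm {d : ℕ} (A : Matrix (Fin d) (Fin d) ℝ) : ℝ :=
  Real.sqrt (∑ j, ∑ k, A j k ^ 2)

/-- Standing assumptions on the coefficients `b, σ`: `σ` is symmetric nonnegative,
`b, σ` are continuous in `t` and uniformly Lipschitz continuous in `(x,m)`. -/
structure CoeffAssumption (d : ℕ) (T : ℝ)
    (b : ℝ → Rd d → Measure (Sd d) → Rd d)
    (σm : ℝ → Rd d → Measure (Sd d) → Matrix (Fin d) (Fin d) ℝ) : Prop where
  psd : ∀ t x m, (σm t x m).PosSemidef
  contb : ∀ x m, MemP2S m → ∀ j : Fin d, ContinuousOn (fun t => b t x m j) (Icc 0 T)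
  contσ : ∀ x m, MemP2S m → ∀ j k : Fin d, ContinuousOn (fun t => σm t x m j k) (Icc 0 T)
  lip : ∃ L, 0 ≤ L ∧ ∀ t ∈ Icc (0:ℝ) T, ∀ x x' m m', MemP2S m → MemP2S m' →
    ‖b t x m - b t x' m'‖ + matNorm (σm t x m - σm t x' m') ≤ L * (‖x - x'‖ + W2S m m')

/-- Standing assumptions on the running reward `f`: Borel measurable, quadratic
growth in `x`, and the aggregated reward `F` is continuous on `[0,T] × P₂(S)`. -/
structure CostAssumption (d : ℕ) (T : ℝ) (f : ℝ → Rd d → Measure (Sd d) → ℝ) : Prop where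
  meas : ∀ m, Measurable (fun p : ℝ × Rd d => f p.1 p.2 m)
  growth : ∀ t m, MemP2S m → ∃ C, ∀ x, |f t x m| ≤ C * (1 + ‖x‖ ^ 2)
  contF : ∀ t ∈ Icc (0:ℝ) T, ∀ m, MemP2S m → ∀ ε > 0, ∃ η > 0,
    ∀ t' ∈ Icc (0:ℝ) T, ∀ m', MemP2S m' → |t' - t| < η → W2S m' m < η →
      |Fint f t' m' - Fint f t m| < ε

/-- Standing assumptions on the terminal reward `g`: upper semicontinuous and
locally bounded on `P₂(ℝ^d)`. -/
structure TerminalAssumption (d : ℕ) (g : Measure (Rd d) → ℝ) : Prop where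
  usc : ∀ μ, MemP2R μ → ∀ ε > 0, ∃ η > 0, ∀ μ', MemP2R μ' → W2R μ' μ < η → g μ' < g μ + ε
  locbdd : ∀ μ, MemP2R μ → ∃ η > 0, ∃ C, ∀ μ', MemP2R μ' → W2R μ' μ < η → |g μ'| ≤ C

/-- `u ∈ C²₂([0,T] × P₂(S))` : `u` admits a jointly continuous linear functional
derivative `dm` with quadratic growth (locally uniformly), which is twice
differentiable in `x` with jointly continuous derivatives, the second one being
bounded in `x` locally uniformly in `(t,m)`; and `u` is differentiable in `t`. -/
structure C12S (d : ℕ) (T : ℝ) (u : ℝ → Measure (Sd d) → ℝ) where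
  dm : ℝ → Measure (Sd d) → Rd d → Bool → ℝ
  dt : ℝ → Measure (Sd d) → ℝ
  Dx : ℝ → Measure (Sd d) → Rd d → Bool → (Rd d →L[ℝ] ℝ)
  Dxx : ℝ → Measure (Sd d) → Rd d → Bool → (Rd d →L[ℝ] Rd d →L[ℝ] ℝ)
  dt_spec : ∀ t ∈ Icc (0:ℝ) T, ∀ m, MemP2S m →
    HasDerivWithinAt (fun s => u s m) (dt t m) (Icc 0 T) t
  fund : ∀ t ∈ Icc (0:ℝ) T, ∀ m m', MemP2S m → MemP2S m' →
    u t m' - u t m = ∫ l in Icc (0:ℝ) 1,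
      ((∫ p, dm t (mix l m' m) p.1 p.2 ∂m') - ∫ p, dm t (mix l m' m) p.1 p.2 ∂m)
  dm_cont : ∀ t m x i, MemP2S m → ∀ ε > 0, ∃ η > 0, ∀ t' m' x', MemP2S m' →
    |t' - t| < η → W2S m' m < η → ‖x' - x‖ < η → |dm t' m' x' i - dm t m x i| < ε
  dm_growth : ∀ t m, MemP2S m → ∃ C ≥ 0, ∃ η > 0, ∀ t' m' x i, MemP2S m' →
    |t' - t| ≤ η → W2S m' m ≤ η → |dm t' m' x i| ≤ C * (1 + ‖x‖ ^ 2)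
  Dx_spec : ∀ t m x i, HasFDerivAt (fun y => dm t m y i) (Dx t m x i) x
  Dxx_spec : ∀ t m x i, HasFDerivAt (fun y => Dx t m y i) (Dxx t m x i) x
  dt_cont : ∀ t m, MemP2S m → ∀ ε > 0, ∃ η > 0, ∀ t' m', MemP2S m' →
    |t' - t| < η → W2S m' m < η → |dt t' m' - dt t m| < ε
  Dx_cont : ∀ t m x i, MemP2S m → ∀ ε > 0, ∃ η > 0, ∀ t' m' x', MemP2S m' →
    |t' - t| < η → W2S m' m < η → ‖x' - x‖ < η → ‖Dx t' m' x' i - Dx t m x i‖ < ε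
  Dxx_cont : ∀ t m x i, MemP2S m → ∀ ε > 0, ∃ η > 0, ∀ t' m' x', MemP2S m' →
    |t' - t| < η → W2S m' m < η → ‖x' - x‖ < η → ‖Dxx t' m' x' i - Dxx t m x i‖ < ε
  Dxx_bdd : ∀ t m, MemP2S m → ∃ C ≥ 0, ∃ η > 0, ∀ t' m' x i, MemP2S m' →
    |t' - t| ≤ η → W2S m' m ≤ η → ‖Dxx t' m' x i‖ ≤ C

/-- `D_I u = δ_m u(·,·,x,1) - δ_m u(·,·,x,0)` -/
def DIu {d : ℕ} {T : ℝ} {u : ℝ → Measure (Sd d) → ℝ} (C : C12S d T u)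
    (t : ℝ) (m : Measure (Sd d)) (x : Rd d) : ℝ :=
  C.dm t m x true - C.dm t m x false

/-- the generator `𝕃u(t,m) = ∂_t u + ∫ [b·∂_x δ_m u₁ + ½ σ² : ∂²_{xx} δ_m u₁] m(dx,1)` -/
def Lop {d : ℕ} {T : ℝ}
    (b : ℝ → Rd d → Measure (Sd d) → Rd d)
    (σm : ℝ → Rd d → Measure (Sd d) → Matrix (Fin d) (Fin d) ℝ)
    {u : ℝ → Measure (Sd d) → ℝ} (C : C12S d T u)
    (t : ℝ) (m : Measure (Sd d)) : ℝ :=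
  C.dt t m + ∫ x, (C.Dx t m x true (b t x m)
    + (1/2) * ∑ j, ∑ k, ((σm t x m * σm t x m) j k)
        * C.Dxx t m x true (Pi.single j 1) (Pi.single k 1)) ∂(slice m true)

/-- the set of values `-(𝕃u + F)(t,m')` over admissible stopping strategies
`m' ∈ C_u(t,m) = {m' ⪯ m : u(t,m') = u(t,m)}` -/
def obstacleSet {d : ℕ} {T : ℝ}
    (b : ℝ → Rd d → Measure (Sd d) → Rd d)
    (σm : ℝ → Rd d → Measure (Sd d) → Matrix (Fin d) (Fin d) ℝ)
    {u : ℝ → Measure (Sd d) → ℝ} (C : C12S d T u)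
    (F : ℝ → Measure (Sd d) → ℝ) (t : ℝ) (m : Measure (Sd d)) : Set ℝ :=
  {r | ∃ m', MemP2S m' ∧ StopOrder m' m ∧ u t m' = u t m ∧
    r = -(Lop b σm C t m' + F t m')}


/-- the Skorokhod distance on the canonical path space -/
def skorokhodDist {d : ℕ} {T : ℝ} (ω ω' : CanonPath d T) : ℝ :=
  sInf { ε : ℝ | 0 < ε ∧ ∃ lam : ℝ → ℝ, StrictMonoOn lam (Icc (-1) T) ∧
      lam '' Icc (-1) T = Icc (-1) T ∧
      ∀ s ∈ Icc (-1:ℝ) T, |lam s - s| ≤ ε ∧ dS (YS ω (lam s)) (YS ω' s) ≤ ε }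

/-- weak convergence of probability measures on the canonical space, tested
against bounded measurable functionals continuous for the Skorokhod distance -/
def WeakConvSK {d : ℕ} {T : ℝ} (P : ℕ → Measure (CanonPath d T))
    (Q : Measure (CanonPath d T)) : Prop :=
  ∀ φ : CanonPath d T → ℝ, Measurable φ → (∃ C, ∀ ω, |φ ω| ≤ C) →
    (∀ ω, ∀ ε > 0, ∃ η > 0, ∀ ω', skorokhodDist ω ω' < η → |φ ω - φ ω'| < ε) →
    Tendsto (fun n => ∫ ω, φ ω ∂(P n)) atTop (nhds (∫ ω, φ ω ∂Q))

/-- `Z` is a `P`-martingale on `[0,T]` w.r.t. the filtration generated by `Y`,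
in the test-function formulation. -/
def IsMartGen {k : ℕ} {Ω' : Type*} [MeasurableSpace Ω'] (Y : ℝ → Ω' → Rd k)
    (Z : ℝ → Ω' → ℝ) (P : Measure Ω') (T : ℝ) : Prop :=
  ∀ s₁ s₂ : ℝ, 0 ≤ s₁ → s₁ ≤ s₂ → s₂ ≤ T →
    ∀ n : ℕ, ∀ r : Fin n → ℝ, (∀ i, r i ∈ Icc (0:ℝ) s₁) →
      ∀ φ : (Fin n → Rd k) → ℝ, Measurable φ → (∃ C, ∀ v, |φ v| ≤ C) →
        ∫ ω, (Z s₂ ω - Z s₁ ω) * φ (fun i => Y (r i) ω) ∂P = 0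

/-- `u ∈ C²₂([0,T] × P₂(ℝ^k))` -/
structure C12E (k : ℕ) (T : ℝ) (u : ℝ → Measure (Rd k) → ℝ) where
  dm : ℝ → Measure (Rd k) → Rd k → ℝ
  dt : ℝ → Measure (Rd k) → ℝ
  Dy : ℝ → Measure (Rd k) → Rd k → (Rd k →L[ℝ] ℝ)
  Dyy : ℝ → Measure (Rd k) → Rd k → (Rd k →L[ℝ] Rd k →L[ℝ] ℝ)
  dt_spec : ∀ t ∈ Icc (0:ℝ) T, ∀ m, MemP2R m →
    HasDerivWithinAt (fun s => u s m) (dt t m) (Icc 0 T) t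
  fund : ∀ t ∈ Icc (0:ℝ) T, ∀ m m', MemP2R m → MemP2R m' →
    u t m' - u t m = ∫ l in Icc (0:ℝ) 1,
      ((∫ y, dm t (mix l m' m) y ∂m') - ∫ y, dm t (mix l m' m) y ∂m)
  dm_cont : ∀ t m y, MemP2R m → ∀ ε > 0, ∃ η > 0, ∀ t' m' y', MemP2R m' →
    |t' - t| < η → W2R m' m < η → ‖y' - y‖ < η → |dm t' m' y' - dm t m y| < ε
  dm_growth : ∀ t m, MemP2R m → ∃ C ≥ 0, ∃ η > 0, ∀ t' m' y, MemP2R m' →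
    |t' - t| ≤ η → W2R m' m ≤ η → |dm t' m' y| ≤ C * (1 + ‖y‖ ^ 2)
  Dy_spec : ∀ t m y, HasFDerivAt (fun z => dm t m z) (Dy t m y) y
  Dyy_spec : ∀ t m y, HasFDerivAt (fun z => Dy t m z) (Dyy t m y) y
  dt_cont : ∀ t m, MemP2R m → ∀ ε > 0, ∃ η > 0, ∀ t' m', MemP2R m' →
    |t' - t| < η → W2R m' m < η → |dt t' m' - dt t m| < ε
  Dy_cont : ∀ t m y, MemP2R m → ∀ ε > 0, ∃ η > 0, ∀ t' m' y', MemP2R m' →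
    |t' - t| < η → W2R m' m < η → ‖y' - y‖ < η → ‖Dy t' m' y' - Dy t m y‖ < ε
  Dyy_cont : ∀ t m y, MemP2R m → ∀ ε > 0, ∃ η > 0, ∀ t' m' y', MemP2R m' →
    |t' - t| < η → W2R m' m < η → ‖y' - y‖ < η → ‖Dyy t' m' y' - Dyy t m y‖ < ε
  Dyy_bdd : ∀ t m, MemP2R m → ∃ C ≥ 0, ∃ η > 0, ∀ t' m' y, MemP2R m' →
    |t' - t| ≤ η → W2R m' m ≤ η → ‖Dyy t' m' y‖ ≤ C

/-- a (time-independent) function on `P₂(S)` admitting a linear functional derivative -/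
structure LinFunDeriv (d : ℕ) (u : Measure (Sd d) → ℝ) where
  dm : Measure (Sd d) → Rd d → Bool → ℝ
  fund : ∀ m m', MemP2S m → MemP2S m' →
    u m' - u m = ∫ l in Icc (0:ℝ) 1,
      ((∫ p, dm (mix l m' m) p.1 p.2 ∂m') - ∫ p, dm (mix l m' m) p.1 p.2 ∂m)
  dm_cont : ∀ m x i, MemP2S m → ∀ ε > 0, ∃ η > 0, ∀ m' x', MemP2S m' →
    W2S m' m < η → ‖x' - x‖ < η → |dm m' x' i - dm m x i| < ε
  dm_growth : ∀ m, MemP2S m → ∃ C ≥ 0, ∃ η > 0, ∀ m' x i, MemP2S m' →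
    W2S m' m ≤ η → |dm m' x i| ≤ C * (1 + ‖x‖ ^ 2)

/-- `D_I u` for a time-independent function -/
def DIu0 {d : ℕ} {u : Measure (Sd d) → ℝ} (L : LinFunDeriv d u)
    (m : Measure (Sd d)) (x : Rd d) : ℝ :=
  L.dm m x true - L.dm m x false

/-- a measure on `Sd d` is determined by its two slices -/
lemma slice_apply_eq {d : ℕ} (μ : Measure (Sd d)) (i : Bool) {s : Set (Sd d)}
    (hs : MeasurableSet s) :
    slice μ i ((fun x => (x, i)) ⁻¹' s) = μ (s ∩ Prod.snd ⁻¹' {i}) := by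
  have hA : MeasurableSet ((fun x : Rd d => (x, i)) ⁻¹' s) :=
    hs.preimage (measurable_prodMk_right)
  rw [slice, Measure.map_apply measurable_fst hA, Measure.restrict_apply
    (hA.preimage measurable_fst)]
  congr 1
  ext ⟨x, j⟩
  simp only [Set.mem_inter_iff, Set.mem_preimage, Set.mem_singleton_iff]
  constructor
  · rintro ⟨h1, h2⟩; subst h2; exact ⟨h1, rfl⟩
  · rintro ⟨h1, h2⟩; subst h2; exact ⟨h1, rfl⟩

lemma eq_of_slices {d : ℕ} {μ ν : Measure (Sd d)}
    (h : ∀ i, slice μ i = slice ν i) : μ = ν := by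
  ext s hs
  have hsnd : MeasurableSet (Prod.snd ⁻¹' ({true} : Set Bool) : Set (Sd d)) :=
    (MeasurableSet.singleton true).preimage measurable_snd
  have hdiff : ∀ κ : Measure (Sd d),
      κ s = κ (s ∩ Prod.snd ⁻¹' {true}) + κ (s ∩ Prod.snd ⁻¹' {false}) := by
    intro κ
    have : s \ Prod.snd ⁻¹' ({true} : Set Bool) = s ∩ Prod.snd ⁻¹' {false} := by
      ext ⟨x, j⟩
      simp only [Set.mem_diff, Set.mem_preimage, Set.mem_singleton_iff,
        Set.mem_inter_iff]
      cases j <;> simp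
    rw [← measure_inter_add_diff s hsnd, this]
  rw [hdiff μ, hdiff ν,
    ← slice_apply_eq μ true hs, ← slice_apply_eq μ false hs,
    ← slice_apply_eq ν true hs, ← slice_apply_eq ν false hs, h true, h false]

lemma slice_true_eq_zero {d : ℕ} {m : Measure (Sd d)}
    (h0 : m {p : Sd d | p.2 = true} = 0) : slice m true = 0 := by
  have : m.restrict (Prod.snd ⁻¹' ({true} : Set Bool)) = 0 := by
    exact Measure.restrict_eq_zero.mpr h0
  rw [slice, this, Measure.map_zero]

lemma withDensity_zero_meas {E : Type*} [MeasurableSpace E] (f : E → ℝ≥0∞) :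
    (0 : Measure E).withDensity f = 0 := by
  ext s hs
  rw [withDensity_apply _ hs]
  simp

/-- **Boundary behavior of classical solutions** (Remark 4.3 (iv)): if
`u ∈ C²₂([0,T] × P₂(S))` is a classical solution of the obstacle problem on the
Wasserstein space, then `u(t,m) = g(m)` for every `t ∈ [0,T]` and every
`m ∈ ∂P₂(S) = {m : m(ℝ^d × {1}) = 0}` (all particles stopped). -/
theorem boundary_behavior
    (d : ℕ) (T : ℝ) (hT : 0 < T)
    (b : ℝ → Rd d → Measure (Sd d) → Rd d)
    (σm : ℝ → Rd d → Measure (Sd d) → Matrix (Fin d) (Fin d) ℝ)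
    (f : ℝ → Rd d → Measure (Sd d) → ℝ) (g : Measure (Rd d) → ℝ)
    (hb : CoeffAssumption d T b σm) (hf : CostAssumption d T f)
    (hg : TerminalAssumption d g)
    (u : ℝ → Measure (Sd d) → ℝ) (C : C12S d T u)
    (hmin : ∀ t ∈ Ico (0:ℝ) T, ∀ m, MemP2S m →
      IsLeast (obstacleSet b σm C (Fint f) t m) 0)
    (hDI : ∀ t ∈ Ico (0:ℝ) T, ∀ m, MemP2S m → ∀ x, 0 ≤ DIu C t m x)
    (hterm : ∀ m, MemP2S m → u T m = gext g m) :
    ∀ m, MemP2S m → m {p : Sd d | p.2 = true} = 0 →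
      ∀ t ∈ Icc (0:ℝ) T, u t m = gext g m := by
  intro m hm h0 t ht
  have hslice : slice m true = 0 := slice_true_eq_zero h0
  -- the time derivative of u(·, m) vanishes on [0,T)
  have hdt : ∀ s ∈ Ico (0:ℝ) T, C.dt s m = 0 := by
    intro s hs
    obtain ⟨m', hm', hord, hum, heq⟩ := (hmin s hs m hm).1
    obtain ⟨p, hpmeas, hp01, htrue, hfalse⟩ := hord
    have hm'm : m' = m := by
      apply eq_of_slices
      intro i
      cases i
      · rw [hfalse, hslice, withDensity_zero_meas, zero_add]
      · rw [htrue, hslice, withDensity_zero_meas]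
    rw [hm'm] at heq
    rw [Lop, Fint, hslice] at heq
    simp only [integral_zero_measure, add_zero] at heq
    linarith
  -- hence u(·, m) is constant on [0,T]
  have hconst : ∀ s ∈ Icc (0:ℝ) T, u s m = u 0 m := by
    apply constant_of_has_deriv_right_zero
    · intro x hx
      exact (C.dt_spec x hx m hm).continuousWithinAt
    · intro x hx
      have h := C.dt_spec x ⟨hx.1, hx.2.le⟩ m hm
      rw [hdt x hx] at h
      refine h.mono_of_mem_nhdsWithin ?_
      refine Filter.mem_of_superset (Icc_mem_nhdsGE_of_mem ⟨le_rfl, hx.2⟩) ?_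
      exact Icc_subset_Icc hx.1 le_rfl
  rw [hconst t ht, ← hconst T ⟨hT.le, le_rfl⟩]
  exact hterm m hm

end MFOS
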